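/- Let B be a finite set of source elements of a set Y, β ∈ B, and β̂(y) = min{β(u) | u ∈ B_y}. Then β̂ is the greatest source element below β that is consistent with B: if α is any source element of Y with α(y) ≤ β(y) for all y ∈ Y that is consistent with every element of B, then α(y) ≤ β̂(y) for all y ∈ Y. -/
import Mathlib


/-- A source element of `Y`: values in `[0,1]`, finite support, total weight at most 1. -/
def IsSourceElem {Y : Type*} (β : Y → ℝ) : Prop :=
  (∀ y, 0 ≤ β y ∧ β y ≤ 1) ∧ (Function.support β).Finite ∧ ∑ᶠ y, β y ≤ 1

/-- `α` is consistent with `δ`: strict preferences of either never contradict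
the (weak) preferences of the other. -/
def ConsistentWith {Y : Type*} (α δ : Y → ℝ) : Prop :=
  ∀ u v : Y, (α u < α v → δ u ≤ δ v) ∧ (δ u < δ v → α u ≤ α v)

/-- The strict preference step of `B`: `u ⊲_δ v` (i.e. `δ u < δ v`) for some `δ ∈ B`. -/
def LtRel {Y : Type*} (B : Set (Y → ℝ)) (u v : Y) : Prop :=
  ∃ δ ∈ B, δ u < δ v

/-- The consistency class of `B` at `y`: `{y}` together with all `u` lying in a common
`⊲`-cycle with `y` in `B`. -/
def consClass {Y : Type*} (B : Set (Y → ℝ)) (y : Y) : Set Y :=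
  {y} ∪ {u | Relation.TransGen (LtRel B) u y ∧ Relation.TransGen (LtRel B) y u}

/-- `β̂(y) = min {β(u) | u ∈ B_y}` (as an infimum; the minimum is attained since
`β` takes only finitely many values). -/
noncomputable def hatOf {Y : Type*} (B : Set (Y → ℝ)) (β : Y → ℝ) : Y → ℝ :=
  fun y => sInf (β '' consClass B y)

/-- `β̂` is the greatest source element below `β` consistent with `B`: any source
element `α ≤ β` (pointwise) that is consistent with every element of `B` satisfies
`α ≤ β̂` pointwise. -/
theorem hatOf_greatest {Y : Type*} (B : Set (Y → ℝ))
    (hfin : B.Finite) (hsrc : ∀ β ∈ B, IsSourceElem β)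
    (β : Y → ℝ) (hβ : β ∈ B)
    (α : Y → ℝ) (hα : IsSourceElem α) (hle : ∀ y : Y, α y ≤ β y)
    (hcons : ∀ δ ∈ B, ConsistentWith α δ) :
    ∀ y : Y, α y ≤ hatOf B β y := by
  intro y
  unfold hatOf
  refine le_csInf ⟨β y, y, Or.inl rfl, rfl⟩ ?_
  rintro b ⟨u, hu, rfl⟩
  rcases hu with hu | ⟨h1, h2⟩
  · rw [Set.mem_singleton_iff] at hu; subst hu; exact hle u
  · have hmono : α y ≤ α u := by
      clear h1
      induction h2 with
      | single h =>
        obtain ⟨δ, hδ, hlt⟩ := h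
        exact ((hcons δ hδ) _ _).2 hlt
      | tail _ h ih =>
        obtain ⟨δ, hδ, hlt⟩ := h
        exact ih.trans (((hcons δ hδ) _ _).2 hlt)
    exact hmono.trans (hle u)
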